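/- A triangle of order n, all of whose rows except the last consist entirely of entries of the form x_i or y_j, is admissible if and only if it is an oriented complete monotone triangle of order n. -/

import Mathlib

open Finset
open scoped Classical

/-- Symbols occurring in a triangle: `x i`, `y i` (indices `1,...,n` encoded by `Fin n`),
`a i j`, `b i j` (the edge `{i+1,j+1}` oriented from smaller to larger, resp. larger to
smaller), and the numbers `1,...,n` of the bottom row. -/
inductive TSym (n : ℕ) where
  | x (i : Fin n)
  | y (i : Fin n)
  | a (i j : Fin n)
  | b (i j : Fin n)
  | num (i : Fin n)
deriving DecidableEq

/-- A triangle of order `n`: row `r` (0-indexed) has `r+1` entries. -/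
def Tri (n : ℕ) := ∀ r : Fin n, Fin (r.val + 1) → TSym n

namespace TSym

variable {n : ℕ}

/-- The symbol lies in `𝒳`. -/
def isX : TSym n → Prop
  | .x _ => True
  | .y _ => True
  | _ => False

/-- The symbol lies in `𝒱_k`. -/
def isV (k : ℕ) : TSym n → Prop
  | .a i j => j.val = i.val + k ∧ 0 < k
  | .b i j => j.val = i.val + k ∧ 0 < k
  | _ => False

/-- Well-formedness of a non-bottom entry: `a i j` and `b i j` require `i < j`;
numbers may not occur. -/
def wf : TSym n → Prop
  | .a i j => i < j
  | .b i j => i < j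
  | .num _ => False
  | _ => True

/-- The left value of a symbol lying in a row of rank `t` (values are `1`-based). -/
def lval (t : ℕ) : TSym n → ℤ
  | .x i => (i.val : ℤ) + 1
  | .y j => (j.val : ℤ) + 1 - t
  | .a i _ => (i.val : ℤ) + 1
  | .b i _ => (i.val : ℤ) + 1
  | .num i => (i.val : ℤ) + 1

/-- The right value of a symbol lying in a row of rank `t`. -/
def rval (t : ℕ) : TSym n → ℤ
  | .x i => (i.val : ℤ) + 1 + t
  | .y j => (j.val : ℤ) + 1
  | .a _ j => (j.val : ℤ) + 1
  | .b _ j => (j.val : ℤ) + 1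
  | .num i => (i.val : ℤ) + 1

end TSym

variable {n : ℕ}

/-- Row `r` is an `𝒳`-row. -/
def IsXRow (t : Tri n) (r : Fin n) : Prop := ∀ i, (t r i).isX

/-- Row `r` has all entries in `𝒱_k`. -/
def IsVRowOf (t : Tri n) (r : Fin n) (k : ℕ) : Prop := ∀ i, (t r i).isV k

/-- Row `r` is a `𝒱`-row. -/
def IsVRow (t : Tri n) (r : Fin n) : Prop := ∃ k, IsVRowOf t r k

/-- The bottom row is `(1,2,...,n)`. -/
def BottomOK (t : Tri n) : Prop :=
  ∀ (r : Fin n), r.val = n - 1 → ∀ i : Fin (r.val + 1),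
    t r i = .num ⟨i.val, by have := i.isLt; have := r.isLt; omega⟩

/-- All non-bottom entries are well-formed. -/
def WellFormed (t : Tri n) : Prop :=
  ∀ r : Fin n, r.val < n - 1 → ∀ i, (t r i).wf

/-- `rk m` is the rank of (1-based) row `m`, for `0 ≤ m ≤ n`; Lean row index `r`
corresponds to row `r+1`.  An admissible ranking: the bottom row has rank `0`,
row `n-1` has rank `1`, and going up, an `𝒳`-row keeps the rank while a row whose
entries lie in `𝒱_k` has rank `k` and raises the rank above it to `k+1`. -/
def IsRanking (t : Tri n) (rk : ℕ → ℕ) : Prop :=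
  rk n = 0 ∧ (1 ≤ n → rk (n - 1) = 1) ∧
  ∀ r : Fin n, r.val < n - 1 →
    (IsXRow t r ∧ rk r.val = rk (r.val + 1)) ∨
    (IsVRowOf t r (rk (r.val + 1)) ∧ rk r.val = rk (r.val + 1) + 1)

/-- The monotone diagonal and monotone row properties: for every local arrangement
`v` directly above consecutive entries `u, w`, we require `l(u) ≤ l(v)` (strict when
`u` is a `y`), `r(v) ≤ r(w)` (strict when `w` is an `x`), and `l(u) < l(w)`. -/
def MonoProps (t : Tri n) (rk : ℕ → ℕ) : Prop :=
  ∀ (r : Fin n) (hr : 1 ≤ r.val) (p : ℕ) (hp : p + 1 < r.val + 1),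
    let u := t r ⟨p, by omega⟩
    let w := t r ⟨p + 1, by omega⟩
    let v := t ⟨r.val - 1, by have := r.isLt; omega⟩ ⟨p, by simp only [Fin.val_mk]; omega⟩
    (u.lval (rk (r.val + 1)) ≤ v.lval (rk r.val)) ∧
    ((∃ j, u = .y j) → u.lval (rk (r.val + 1)) < v.lval (rk r.val)) ∧
    (v.rval (rk r.val) ≤ w.rval (rk (r.val + 1))) ∧
    ((∃ j, w = .x j) → v.rval (rk r.val) < w.rval (rk (r.val + 1))) ∧
    (u.lval (rk (r.val + 1)) < w.lval (rk (r.val + 1)))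

/-- Admissibility of a triangle. -/
def IsAdmissible (t : Tri n) : Prop :=
  BottomOK t ∧ WellFormed t ∧ ∃ rk, IsRanking t rk ∧ MonoProps t rk

/-- The rank of the row with Lean index `r` (i.e. of row `r+1`), computed directly:
one more than the number of `𝒱`-rows strictly below it (above the bottom row). -/
noncomputable def rankOf (t : Tri n) (r : ℕ) : ℕ :=
  1 + ((univ : Finset (Fin n)).filter fun s => r < s.val ∧ IsVRow t s).card

open MvPolynomial in
/-- The weight of a symbol. -/
noncomputable def TSym.weight : TSym n → MvPolynomial (Fin n ⊕ Fin n) ℤ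
  | .x i => X (Sum.inl i)
  | .y j => X (Sum.inr j)
  | .a i _ => X (Sum.inl i)
  | .b _ j => X (Sum.inr j)
  | .num _ => 1

/-- The weight of a triangle: the product of the weights of its non-bottom entries. -/
noncomputable def weight (t : Tri n) : MvPolynomial (Fin n ⊕ Fin n) ℤ :=
  ∏ r : Fin n, if r.val < n - 1 then ∏ i, (t r i).weight else 1

/-- The raising operator `R_d` (`1 ≤ d < n`), acting on (paper-indexed) rows `d-1`
and `d`, i.e. Lean rows `d-2` and `d-1`. -/
noncomputable def Raise (d : ℕ) (t : Tri n) : Tri n := fun r i =>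
  if hu : 2 ≤ d ∧ r.val + 2 = d ∧ r.val + 1 < n then
    -- row d-1: swap with the entry diagonally below, else convert to an 𝒳-symbol
    match t r i with
    | .b j k =>
        if t ⟨r.val + 1, hu.2.2⟩ ⟨i.val, by have := i.isLt; simp only [Fin.val_mk]; omega⟩
            = .x j then .x j else .y k
    | .a j k =>
        if t ⟨r.val + 1, hu.2.2⟩ ⟨i.val + 1, by have := i.isLt; simp only [Fin.val_mk]; omega⟩
            = .y k then .y k else .x j
    | s => s
  else if hl : r.val + 1 = d then
    -- row d: swap with the entry diagonally above, else convert to a 𝒱-symbol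
    let tk := rankOf t r.val
    match t r i with
    | .x j =>
        if hi : i.val < r.val then
          match t ⟨r.val - 1, by have := r.isLt; omega⟩
              ⟨i.val, by simp only [Fin.val_mk]; omega⟩ with
          | .b j' k => if j' = j then .b j' k
              else if h2 : j.val + tk < n then .a j ⟨j.val + tk, h2⟩ else .x j
          | _ => if h2 : j.val + tk < n then .a j ⟨j.val + tk, h2⟩ else .x j
        else if h2 : j.val + tk < n then .a j ⟨j.val + tk, h2⟩ else .x j
    | .y k =>
        if hi : 1 ≤ i.val then
          match t ⟨r.val - 1, by have := r.isLt; omega⟩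
              ⟨i.val - 1, by have := i.isLt; simp only [Fin.val_mk]; omega⟩ with
          | .a j k' => if k' = k then .a j k'
              else if h2 : tk ≤ k.val then .b ⟨k.val - tk, by have := k.isLt; omega⟩ k
              else .y k
          | _ => if h2 : tk ≤ k.val then .b ⟨k.val - tk, by have := k.isLt; omega⟩ k
              else .y k
        else if h2 : tk ≤ k.val then .b ⟨k.val - tk, by have := k.isLt; omega⟩ k else .y k
    | s => s
  else t r i

/-- The lowering operator `L_d` (`1 ≤ d < n`), inverse to `R_d`. -/
noncomputable def Lower (d : ℕ) (t : Tri n) : Tri n := fun r i =>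
  if hu : 2 ≤ d ∧ r.val + 2 = d ∧ r.val + 1 < n then
    -- row d-1: swap with the entry diagonally below, else convert to a 𝒱-symbol
    let tk := rankOf t (r.val + 1)
    match t r i with
    | .x j =>
        (match t ⟨r.val + 1, hu.2.2⟩ ⟨i.val, by have := i.isLt; simp only [Fin.val_mk]; omega⟩ with
          | .b j' k => if j' = j then .b j' k
              else if h2 : j.val + tk < n then .a j ⟨j.val + tk, h2⟩ else .x j
          | _ => if h2 : j.val + tk < n then .a j ⟨j.val + tk, h2⟩ else .x j)
    | .y k =>
        (match t ⟨r.val + 1, hu.2.2⟩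
            ⟨i.val + 1, by have := i.isLt; simp only [Fin.val_mk]; omega⟩ with
          | .a j k' => if k' = k then .a j k'
              else if h2 : tk ≤ k.val then .b ⟨k.val - tk, by have := k.isLt; omega⟩ k
              else .y k
          | _ => if h2 : tk ≤ k.val then .b ⟨k.val - tk, by have := k.isLt; omega⟩ k
              else .y k)
    | s => s
  else if hl : r.val + 1 = d then
    -- row d: swap with the entry diagonally above, else convert to an 𝒳-symbol
    match t r i with
    | .b j k =>
        if hi : i.val < r.val then
          (if t ⟨r.val - 1, by have := r.isLt; omega⟩
              ⟨i.val, by simp only [Fin.val_mk]; omega⟩ = .x j then .x j else .y k)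
        else .y k
    | .a j k =>
        if hi : 1 ≤ i.val then
          (if t ⟨r.val - 1, by have := r.isLt; omega⟩
              ⟨i.val - 1, by have := i.isLt; simp only [Fin.val_mk]; omega⟩ = .y k
           then .y k else .x j)
        else .x j
    | s => s
  else t r i

/-- The numerical value of an `𝒳`-symbol or a bottom-row number. -/
def xyval {n : ℕ} : TSym n → ℤ
  | .x i => (i.val : ℤ) + 1
  | .y i => (i.val : ℤ) + 1
  | .a _ _ => 0
  | .b _ _ => 0
  | .num i => (i.val : ℤ) + 1

/-- `t` is (the triangle encoding of) an oriented complete monotone triangle: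
all non-bottom rows are `𝒳`-rows, the underlying numerical triangle is a complete
monotone triangle, and orientations are forced as prescribed: an entry equal to its
lower-left neighbour is an `x` (right-oriented), an entry equal to its lower-right
neighbour is a `y` (left-oriented). -/
def IsOCMTTri {n : ℕ} (t : Tri n) : Prop :=
  BottomOK t ∧
  (∀ r : Fin n, r.val < n - 1 → IsXRow t r) ∧
  (∀ (r : Fin n) (p q : Fin (r.val + 1)), p < q → xyval (t r p) < xyval (t r q)) ∧
  (∀ (r : Fin n) (h : r.val + 1 < n) (p : Fin (r.val + 1)),
      xyval (t ⟨r.val + 1, h⟩ ⟨p.val, by have := p.isLt; simp only [Fin.val_mk]; omega⟩)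
          ≤ xyval (t r p) ∧
      xyval (t r p)
          ≤ xyval (t ⟨r.val + 1, h⟩ ⟨p.val + 1, by have := p.isLt; simp only [Fin.val_mk]; omega⟩)) ∧
  (∀ (r : Fin n) (h : r.val + 1 < n) (p : Fin (r.val + 1)),
      (xyval (t ⟨r.val + 1, h⟩ ⟨p.val, by have := p.isLt; simp only [Fin.val_mk]; omega⟩)
          = xyval (t r p) → ∃ j, t r p = .x j) ∧
      (xyval (t r p)
          = xyval (t ⟨r.val + 1, h⟩ ⟨p.val + 1, by have := p.isLt; simp only [Fin.val_mk]; omega⟩)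
          → ∃ j, t r p = .y j))

namespace Stmt11Aux

variable {n : ℕ} {t : Tri n}

lemma isX_cases {s : TSym n} (h : s.isX) :
    (∃ j, s = TSym.x j) ∨ (∃ j, s = TSym.y j) := by
  cases s with
  | x j => exact Or.inl ⟨j, rfl⟩
  | y j => exact Or.inr ⟨j, rfl⟩
  | a i j => exact absurd h (by simp [TSym.isX])
  | b i j => exact absurd h (by simp [TSym.isX])
  | num i => exact absurd h (by simp [TSym.isX])

lemma tri_congr (t : Tri n) {r r' : Fin n} (h : r = r')
    {i : Fin (r.val + 1)} {i' : Fin (r'.val + 1)} (h2 : i.val = i'.val) :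
    t r i = t r' i' := by
  subst h
  rw [Fin.ext h2]

lemma rank_one (rk : ℕ → ℕ) (hR : IsRanking t rk)
    (hX : ∀ r : Fin n, r.val < n - 1 → IsXRow t r) :
    ∀ k m, n - 1 - m = k → 1 ≤ m → m ≤ n - 1 → rk m = 1 := by
  intro k
  induction k with
  | zero =>
    intro m h0 h1 h2
    have hm : m = n - 1 := by omega
    subst hm
    exact hR.2.1 (by omega)
  | succ k ih =>
    intro m h0 h1 h2
    have hm : m < n - 1 := by omega
    have hmn : m < n := by omega
    rcases hR.2.2 ⟨m, hmn⟩ (show m < n - 1 from hm) with ⟨_, he⟩ | ⟨hv, _⟩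
    · simp only [Fin.val_mk] at he
      rw [he]
      exact ih (m + 1) (by omega) (by omega) (by omega)
    · exfalso
      have h0' := hv ⟨0, by omega⟩
      rcases isX_cases (hX ⟨m, hmn⟩ (show m < n - 1 from hm) ⟨0, by omega⟩) with ⟨j, hj⟩ | ⟨j, hj⟩ <;>
        rw [hj] at h0' <;> simp [TSym.isV] at h0'

lemma finchain {N : ℕ} (f : Fin (N + 1) → ℤ)
    (hadj : ∀ p (hp : p + 1 < N + 1), f ⟨p, by omega⟩ < f ⟨p + 1, hp⟩) :
    ∀ p q : Fin (N + 1), p < q → f p < f q := by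
  have key : ∀ q, ∀ hq : q < N + 1, ∀ p, ∀ _hpq : p < q, f ⟨p, by omega⟩ < f ⟨q, hq⟩ := by
    intro q
    induction q with
    | zero => intro hq p hpq; omega
    | succ q ih =>
      intro hq p hpq
      rcases Nat.lt_or_ge p q with h' | h'
      · exact (ih (by omega) p h').trans (hadj q hq)
      · have hpq' : p = q := by omega
        subst hpq'
        exact hadj p hq
  intro p q hpq
  have := key q.val q.isLt p.val (Fin.lt_def.mp hpq)
  simpa using this

@[irreducible] def rkfun (n : ℕ) : ℕ → ℕ := fun m => min 1 (n - m)

lemma rkfun_lt {m : ℕ} (h : m < n) : rkfun n m = 1 := by unfold rkfun; omega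

lemma rkfun_ge {m : ℕ} (h : n ≤ m) : rkfun n m = 0 := by unfold rkfun; omega

end Stmt11Aux

namespace Stmt11Aux

variable {n : ℕ} {t : Tri n}

lemma forward (hAdm : IsAdmissible t) (hX : ∀ r : Fin n, r.val < n - 1 → IsXRow t r) :
    IsOCMTTri t := by
  obtain ⟨hB, hW, rk, hR, hM⟩ := hAdm
  have rk1 : ∀ m, 1 ≤ m → m ≤ n - 1 → rk m = 1 := fun m h1 h2 =>
    rank_one rk hR hX _ m rfl h1 h2
  have hadj : ∀ (r : Fin n) (p : ℕ) (hp : p + 1 < r.val + 1),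
      xyval (t r ⟨p, by omega⟩) < xyval (t r ⟨p + 1, hp⟩) := by
    intro r p hp
    by_cases hb : r.val = n - 1
    · rw [hB r hb ⟨p, by omega⟩, hB r hb ⟨p + 1, hp⟩]
      simp only [xyval, Fin.val_mk]
      omega
    · have hrn : r.val < n - 1 := by have := r.isLt; omega
      have hr1 : 1 ≤ r.val := by omega
      obtain ⟨c1, c2, c3, c4, c5⟩ := hM r hr1 p hp
      have e1 : rk (r.val + 1) = 1 := rk1 _ (by omega) (by omega)
      have e2 : rk r.val = 1 := rk1 _ (by omega) (by omega)
      rw [e1, e2] at c1 c2 c3 c4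
      clear c5
      rcases isX_cases (hX r hrn ⟨p, by omega⟩) with ⟨j1, hj1⟩ | ⟨j1, hj1⟩ <;>
      rcases isX_cases (hX r hrn ⟨p + 1, hp⟩) with ⟨j2, hj2⟩ | ⟨j2, hj2⟩ <;>
      rcases isX_cases (hX ⟨r.val - 1, by omega⟩ (show r.val - 1 < n - 1 by omega)
        ⟨p, show p < r.val - 1 + 1 by omega⟩) with ⟨j3, hj3⟩ | ⟨j3, hj3⟩ <;>
      rw [hj1] at c1 c2 <;> rw [hj2] at c3 c4 <;> rw [hj3] at c1 c2 c3 c4 <;>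
      rw [hj1, hj2] <;>
      (try replace c2 := c2 ⟨_, rfl⟩) <;>
      (try replace c4 := c4 ⟨_, rfl⟩) <;>
      simp only [TSym.lval, TSym.rval, xyval, Nat.cast_one] at c1 c2 c3 c4 ⊢ <;>
      omega
  have hRow : ∀ (r : Fin n) (p q : Fin (r.val + 1)), p < q → xyval (t r p) < xyval (t r q) :=
    fun r => finchain (fun i => xyval (t r i)) (fun p hp => hadj r p hp)
  have hKey : ∀ (r : Fin n) (h : r.val + 1 < n) (p : Fin (r.val + 1)),
      ∀ (q1 : p.val < r.val + 1 + 1) (q2 : p.val + 1 < r.val + 1 + 1),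
      xyval (t ⟨r.val + 1, h⟩ ⟨p.val, q1⟩) ≤ xyval (t r p) ∧
      (xyval (t ⟨r.val + 1, h⟩ ⟨p.val, q1⟩) = xyval (t r p) → ∃ j, t r p = TSym.x j) ∧
      xyval (t r p) ≤ xyval (t ⟨r.val + 1, h⟩ ⟨p.val + 1, q2⟩) ∧
      (xyval (t r p) = xyval (t ⟨r.val + 1, h⟩ ⟨p.val + 1, q2⟩) → ∃ j, t r p = TSym.y j) := by
    intro r h p q1 q2
    obtain ⟨c1, c2, c3, c4, c5⟩ :=
      hM ⟨r.val + 1, h⟩ (Nat.le_add_left 1 r.val) p.val (Nat.succ_lt_succ p.isLt)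
    clear c5
    simp only [Fin.val_mk, Nat.add_sub_cancel, Fin.eta] at c1 c2 c3 c4
    have Ev : t ⟨r.val + 1 - 1, by omega⟩ p = t r p := rfl
    rw [Ev] at c1 c2 c3 c4
    have e1 : rk (r.val + 1) = 1 := rk1 _ (by omega) (by omega)
    rw [e1] at c1 c2 c3 c4
    by_cases hbot : r.val + 1 = n - 1
    · have e0 : rk (r.val + 1 + 1) = 0 := by
        rw [show r.val + 1 + 1 = n by omega]; exact hR.1
      rw [e0] at c1 c2 c3 c4
      simp only [hB ⟨r.val + 1, h⟩ hbot, Fin.val_mk] at c1 c2 c3 c4 ⊢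
      rcases isX_cases (hX r (by omega) p) with ⟨jv, hv⟩ | ⟨jv, hv⟩ <;>
        rw [hv] at c1 c2 c3 c4 ⊢ <;>
        (try replace c2 := c2 ⟨_, rfl⟩) <;>
        (try replace c4 := c4 ⟨_, rfl⟩) <;>
        simp only [TSym.lval, TSym.rval, xyval, Nat.cast_one, Nat.cast_zero] at c1 c2 c3 c4 ⊢
      · exact ⟨by omega, fun _ => ⟨jv, rfl⟩, by omega, fun hE => absurd hE (by omega)⟩
      · exact ⟨by omega, fun hE => absurd hE (by omega), by omega, fun _ => ⟨jv, rfl⟩⟩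
    · have e0 : rk (r.val + 1 + 1) = 1 := rk1 _ (by omega) (by omega)
      rw [e0] at c1 c2 c3 c4
      rcases isX_cases (hX ⟨r.val + 1, h⟩ (show r.val + 1 < n - 1 by omega) ⟨p.val, q1⟩)
        with ⟨ju, hu⟩ | ⟨ju, hu⟩ <;>
      rcases isX_cases (hX ⟨r.val + 1, h⟩ (show r.val + 1 < n - 1 by omega) ⟨p.val + 1, q2⟩)
        with ⟨jw, hw⟩ | ⟨jw, hw⟩ <;>
      rcases isX_cases (hX r (by omega) p) with ⟨jv, hv⟩ | ⟨jv, hv⟩ <;>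
      rw [hu] at c1 c2 <;> rw [hw] at c3 c4 <;> rw [hv] at c1 c2 c3 c4 <;>
      rw [hu, hw, hv] <;>
      (try replace c2 := c2 ⟨_, rfl⟩) <;>
      (try replace c4 := c4 ⟨_, rfl⟩) <;>
      simp only [TSym.lval, TSym.rval, xyval, Nat.cast_one] at c1 c2 c3 c4 ⊢ <;>
      first
        | exact ⟨by omega, fun _ => ⟨jv, rfl⟩, by omega, fun hE => absurd hE (by omega)⟩
        | exact ⟨by omega, fun hE => absurd hE (by omega), by omega, fun _ => ⟨jv, rfl⟩⟩
  refine ⟨hB, hX, hRow, ?_, ?_⟩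
  · intro r h p
    have := hKey r h p (by have := p.isLt; omega) (by have := p.isLt; omega)
    exact ⟨this.1, this.2.2.1⟩
  · intro r h p
    have := hKey r h p (by have := p.isLt; omega) (by have := p.isLt; omega)
    exact ⟨this.2.1, this.2.2.2⟩

end Stmt11Aux

namespace Stmt11Aux

variable {n : ℕ} {t : Tri n}

lemma diag_below
    (hD : ∀ (r : Fin n) (h : r.val + 1 < n) (i : ℕ) (hi : i < r.val + 1),
      xyval (t ⟨r.val + 1, h⟩ ⟨i, Nat.lt_succ_of_lt hi⟩) ≤ xyval (t r ⟨i, hi⟩) ∧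
      xyval (t r ⟨i, hi⟩) ≤ xyval (t ⟨r.val + 1, h⟩ ⟨i + 1, Nat.succ_lt_succ hi⟩))
    (hF : ∀ (r : Fin n) (h : r.val + 1 < n) (i : ℕ) (hi : i < r.val + 1),
      (xyval (t ⟨r.val + 1, h⟩ ⟨i, Nat.lt_succ_of_lt hi⟩) = xyval (t r ⟨i, hi⟩) →
        ∃ j, t r ⟨i, hi⟩ = TSym.x j) ∧
      (xyval (t r ⟨i, hi⟩) = xyval (t ⟨r.val + 1, h⟩ ⟨i + 1, Nat.succ_lt_succ hi⟩) →
        ∃ j, t r ⟨i, hi⟩ = TSym.y j))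
    (r : Fin n) (hr : 1 ≤ r.val) (p : ℕ) (hp : p + 1 < r.val + 1) :
    xyval (t r ⟨p, Nat.lt_of_succ_lt hp⟩)
        ≤ xyval (t ⟨r.val - 1, Nat.lt_of_le_of_lt (Nat.sub_le _ _) r.isLt⟩
            ⟨p, Nat.lt_succ_of_le (Nat.le_sub_one_of_lt (Nat.lt_of_succ_lt_succ hp))⟩) ∧
    (xyval (t r ⟨p, Nat.lt_of_succ_lt hp⟩)
        = xyval (t ⟨r.val - 1, Nat.lt_of_le_of_lt (Nat.sub_le _ _) r.isLt⟩
            ⟨p, Nat.lt_succ_of_le (Nat.le_sub_one_of_lt (Nat.lt_of_succ_lt_succ hp))⟩) →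
      ∃ j, t ⟨r.val - 1, Nat.lt_of_le_of_lt (Nat.sub_le _ _) r.isLt⟩
            ⟨p, Nat.lt_succ_of_le (Nat.le_sub_one_of_lt (Nat.lt_of_succ_lt_succ hp))⟩
          = TSym.x j) ∧
    xyval (t ⟨r.val - 1, Nat.lt_of_le_of_lt (Nat.sub_le _ _) r.isLt⟩
            ⟨p, Nat.lt_succ_of_le (Nat.le_sub_one_of_lt (Nat.lt_of_succ_lt_succ hp))⟩)
        ≤ xyval (t r ⟨p + 1, hp⟩) ∧
    (xyval (t ⟨r.val - 1, Nat.lt_of_le_of_lt (Nat.sub_le _ _) r.isLt⟩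
            ⟨p, Nat.lt_succ_of_le (Nat.le_sub_one_of_lt (Nat.lt_of_succ_lt_succ hp))⟩)
        = xyval (t r ⟨p + 1, hp⟩) →
      ∃ j, t ⟨r.val - 1, Nat.lt_of_le_of_lt (Nat.sub_le _ _) r.isLt⟩
            ⟨p, Nat.lt_succ_of_le (Nat.le_sub_one_of_lt (Nat.lt_of_succ_lt_succ hp))⟩
          = TSym.y j) := by
  have hq : r.val - 1 < n := Nat.lt_of_le_of_lt (Nat.sub_le _ _) r.isLt
  have h' : r.val - 1 + 1 < n := by have := r.isLt; omega
  have hP2 : p < r.val - 1 + 1 :=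
    Nat.lt_succ_of_le (Nat.le_sub_one_of_lt (Nat.lt_of_succ_lt_succ hp))
  obtain ⟨d1, d2⟩ := hD ⟨r.val - 1, hq⟩ h' p hP2
  obtain ⟨f1, f2⟩ := hF ⟨r.val - 1, hq⟩ h' p hP2
  have E1 : t ⟨r.val - 1 + 1, h'⟩ ⟨p, Nat.lt_succ_of_lt hP2⟩
      = t r ⟨p, Nat.lt_of_succ_lt hp⟩ :=
    tri_congr t (Fin.ext (by simp only [Fin.val_mk]; omega)) (by simp only [Fin.val_mk])
  have E2 : t ⟨r.val - 1 + 1, h'⟩ ⟨p + 1, Nat.succ_lt_succ hP2⟩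
      = t r ⟨p + 1, hp⟩ :=
    tri_congr t (Fin.ext (by simp only [Fin.val_mk]; omega)) (by simp only [Fin.val_mk])
  have eA := congrArg xyval E1
  have eC := congrArg xyval E2
  exact ⟨eA.symm.trans_le d1, fun hE => f1 (eA.trans hE),
    d2.trans_eq eC, fun hE => f2 (hE.trans eC.symm)⟩

end Stmt11Aux

namespace Stmt11Aux

variable {n : ℕ} {t : Tri n}

set_option maxHeartbeats 1600000 in
lemma backward (hO : IsOCMTTri t) :
    IsAdmissible t ∧ ∀ r : Fin n, r.val < n - 1 → IsXRow t r := by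
  obtain ⟨hB, hX, hRow, hDiag, hForce⟩ := hO
  have hD : ∀ (r : Fin n) (h : r.val + 1 < n) (i : ℕ) (hi : i < r.val + 1),
      xyval (t ⟨r.val + 1, h⟩ ⟨i, Nat.lt_succ_of_lt hi⟩) ≤ xyval (t r ⟨i, hi⟩) ∧
      xyval (t r ⟨i, hi⟩) ≤ xyval (t ⟨r.val + 1, h⟩ ⟨i + 1, Nat.succ_lt_succ hi⟩) :=
    fun r h i hi => hDiag r h ⟨i, hi⟩
  have hF : ∀ (r : Fin n) (h : r.val + 1 < n) (i : ℕ) (hi : i < r.val + 1),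
      (xyval (t ⟨r.val + 1, h⟩ ⟨i, Nat.lt_succ_of_lt hi⟩) = xyval (t r ⟨i, hi⟩) →
        ∃ j, t r ⟨i, hi⟩ = TSym.x j) ∧
      (xyval (t r ⟨i, hi⟩) = xyval (t ⟨r.val + 1, h⟩ ⟨i + 1, Nat.succ_lt_succ hi⟩) →
        ∃ j, t r ⟨i, hi⟩ = TSym.y j) :=
    fun r h i hi => hForce r h ⟨i, hi⟩
  refine ⟨⟨hB, ?_, ⟨rkfun n, ?_, ?_⟩⟩, hX⟩
  · -- WellFormed
    intro r hr i
    rcases isX_cases (hX r hr i) with ⟨j, hj⟩ | ⟨j, hj⟩ <;> rw [hj] <;> trivial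
  · -- IsRanking
    refine ⟨rkfun_ge le_rfl, fun h => rkfun_lt (by omega), fun r hr => Or.inl ⟨hX r hr, ?_⟩⟩
    rw [rkfun_lt (show r.val < n from r.isLt), rkfun_lt (show r.val + 1 < n by omega)]
  · -- MonoProps
    intro r hr p hp
    obtain ⟨d1, f1, d2, f2⟩ := diag_below hD hF r hr p hp
    have Erk : rkfun n r.val = 1 := rkfun_lt r.isLt
    have hP1 : p < r.val + 1 := Nat.lt_of_succ_lt hp
    have hQ : r.val - 1 < n := Nat.lt_of_le_of_lt (Nat.sub_le _ _) r.isLt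
    have hP2 : p < r.val - 1 + 1 :=
      Nat.lt_succ_of_le (Nat.le_sub_one_of_lt (Nat.lt_of_succ_lt_succ hp))
    have hS : xyval (t r ⟨p, hP1⟩) < xyval (t r ⟨p + 1, hp⟩) :=
      hRow r _ _ (Fin.mk_lt_mk.mpr (Nat.lt_succ_self p))
    have hGap : (∃ j, t r ⟨p, hP1⟩ = TSym.x j) → (∃ j, t r ⟨p + 1, hp⟩ = TSym.y j) →
        xyval (t r ⟨p + 1, hp⟩) ≠ xyval (t r ⟨p, hP1⟩) + 1 := by
      rintro ⟨ju, hju⟩ ⟨jw, hjw⟩ hEq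
      by_cases hbot : r.val = n - 1
      · rw [hB r hbot ⟨p, hP1⟩] at hju
        exact nomatch hju
      · have h'' : r.val + 1 < n := by have := r.isLt; omega
        obtain ⟨dA1, dA2⟩ := hD r h'' p hP1
        obtain ⟨dB1, dB2⟩ := hD r h'' (p + 1) hp
        obtain ⟨fA1, fA2⟩ := hF r h'' p hP1
        obtain ⟨fB1, fB2⟩ := hF r h'' (p + 1) hp
        rcases eq_or_lt_of_le dA2 with hm | hm
        · rcases fA2 hm with ⟨j, hj⟩
          rw [hju] at hj
          exact nomatch hj
        · rcases fB1 (by omega) with ⟨j, hj⟩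
          rw [hjw] at hj
          exact nomatch hj
    refine ⟨?_, ?_, ?_, ?_, ?_⟩
    · -- l(u) ≤ l(v)
      rw [Erk]
      by_cases hbot : r.val = n - 1
      · rw [rkfun_ge (show n ≤ r.val + 1 by omega), hB r hbot ⟨p, hP1⟩]
        rw [hB r hbot ⟨p, hP1⟩] at d1 f1
        rcases isX_cases (hX ⟨r.val - 1, hQ⟩ (show r.val - 1 < n - 1 by omega) ⟨p, hP2⟩)
          with ⟨jv, hv⟩ | ⟨jv, hv⟩ <;>
        rw [hv] at d1 f1 ⊢ <;>
        simp only [TSym.lval, xyval, Fin.val_mk, Nat.cast_one, Nat.cast_zero] at d1 f1 ⊢ <;>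
        first
          | omega
          | ((rcases eq_or_lt_of_le d1 with hE | hE) <;>
              first | omega | (rcases f1 hE with ⟨j, hj⟩; exact nomatch hj))
      · rw [rkfun_lt (show r.val + 1 < n by omega)]
        rcases isX_cases (hX r (show r.val < n - 1 by omega) ⟨p, hP1⟩)
          with ⟨ju, hu⟩ | ⟨ju, hu⟩ <;>
        rcases isX_cases (hX ⟨r.val - 1, hQ⟩ (show r.val - 1 < n - 1 by omega) ⟨p, hP2⟩)
          with ⟨jv, hv⟩ | ⟨jv, hv⟩ <;>
        rw [hu] at d1 f1 <;> rw [hv] at d1 f1 <;> rw [hu, hv] <;>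
        simp only [TSym.lval, xyval, Nat.cast_one] at d1 f1 ⊢ <;>
        first
          | omega
          | ((rcases eq_or_lt_of_le d1 with hE | hE) <;>
              first | omega | (rcases f1 hE with ⟨j, hj⟩; exact nomatch hj))
    · -- strict when u is a y
      rintro ⟨ju, hu⟩
      by_cases hbot : r.val = n - 1
      · rw [hB r hbot ⟨p, hP1⟩] at hu
        exact nomatch hu
      · rw [Erk, rkfun_lt (show r.val + 1 < n by omega), hu]
        rw [hu] at d1 f1
        rcases isX_cases (hX ⟨r.val - 1, hQ⟩ (show r.val - 1 < n - 1 by omega) ⟨p, hP2⟩)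
          with ⟨jv, hv⟩ | ⟨jv, hv⟩ <;>
        rw [hv] at d1 f1 ⊢ <;>
        simp only [TSym.lval, xyval, Nat.cast_one] at d1 f1 ⊢ <;>
        first
          | omega
          | ((rcases eq_or_lt_of_le d1 with hE | hE) <;>
              first | omega | (rcases f1 hE with ⟨j, hj⟩; exact nomatch hj))
    · -- r(v) ≤ r(w)
      rw [Erk]
      by_cases hbot : r.val = n - 1
      · rw [rkfun_ge (show n ≤ r.val + 1 by omega), hB r hbot ⟨p + 1, hp⟩]
        rw [hB r hbot ⟨p + 1, hp⟩] at d2 f2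
        rcases isX_cases (hX ⟨r.val - 1, hQ⟩ (show r.val - 1 < n - 1 by omega) ⟨p, hP2⟩)
          with ⟨jv, hv⟩ | ⟨jv, hv⟩ <;>
        rw [hv] at d2 f2 ⊢ <;>
        simp only [TSym.rval, xyval, Fin.val_mk, Nat.cast_one, Nat.cast_zero] at d2 f2 ⊢ <;>
        first
          | omega
          | ((rcases eq_or_lt_of_le d2 with hE | hE) <;>
              first | omega | (rcases f2 hE with ⟨j, hj⟩; exact nomatch hj))
      · rw [rkfun_lt (show r.val + 1 < n by omega)]
        rcases isX_cases (hX r (show r.val < n - 1 by omega) ⟨p + 1, hp⟩)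
          with ⟨jw, hw⟩ | ⟨jw, hw⟩ <;>
        rcases isX_cases (hX ⟨r.val - 1, hQ⟩ (show r.val - 1 < n - 1 by omega) ⟨p, hP2⟩)
          with ⟨jv, hv⟩ | ⟨jv, hv⟩ <;>
        rw [hw] at d2 f2 <;> rw [hv] at d2 f2 <;> rw [hw, hv] <;>
        simp only [TSym.rval, xyval, Nat.cast_one] at d2 f2 ⊢ <;>
        first
          | omega
          | ((rcases eq_or_lt_of_le d2 with hE | hE) <;>
              first | omega | (rcases f2 hE with ⟨j, hj⟩; exact nomatch hj))
    · -- strict when w is an x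
      rintro ⟨jw, hw⟩
      by_cases hbot : r.val = n - 1
      · rw [hB r hbot ⟨p + 1, hp⟩] at hw
        exact nomatch hw
      · rw [Erk, rkfun_lt (show r.val + 1 < n by omega), hw]
        rw [hw] at d2 f2
        rcases isX_cases (hX ⟨r.val - 1, hQ⟩ (show r.val - 1 < n - 1 by omega) ⟨p, hP2⟩)
          with ⟨jv, hv⟩ | ⟨jv, hv⟩ <;>
        rw [hv] at d2 f2 ⊢ <;>
        simp only [TSym.rval, xyval, Nat.cast_one] at d2 f2 ⊢ <;>
        first
          | omega
          | ((rcases eq_or_lt_of_le d2 with hE | hE) <;>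
              first | omega | (rcases f2 hE with ⟨j, hj⟩; exact nomatch hj))
    · -- l(u) < l(w)
      by_cases hbot : r.val = n - 1
      · rw [hB r hbot ⟨p, hP1⟩, hB r hbot ⟨p + 1, hp⟩]
        simp only [TSym.lval, Fin.val_mk]
        omega
      · rcases isX_cases (hX r (show r.val < n - 1 by omega) ⟨p, hP1⟩)
          with ⟨ju, hu⟩ | ⟨ju, hu⟩ <;>
        rcases isX_cases (hX r (show r.val < n - 1 by omega) ⟨p + 1, hp⟩)
          with ⟨jw, hw⟩ | ⟨jw, hw⟩ <;>
        rw [rkfun_lt (show r.val + 1 < n by omega)] <;>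
        rw [hu] at hS <;> rw [hw] at hS <;>
        (try replace hGap := hGap ⟨ju, hu⟩ ⟨jw, hw⟩) <;>
        (try rw [hu] at hGap) <;> (try rw [hw] at hGap) <;>
        rw [hu, hw] <;>
        simp only [TSym.lval, xyval, Nat.cast_one] at hS hGap ⊢ <;>
        omega

end Stmt11Aux

/-- A triangle all of whose non-bottom rows are `𝒳`-rows is admissible iff it is an
oriented complete monotone triangle. -/
theorem stmt11 (n : ℕ) (t : Tri n) :
    (IsAdmissible t ∧ ∀ r : Fin n, r.val < n - 1 → IsXRow t r) ↔ IsOCMTTri t := by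
  exact ⟨fun h => Stmt11Aux.forward h.1 h.2, Stmt11Aux.backward⟩
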